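/- (Cotlar–Stein type bound) Let H be a Hilbert space and T_0, …, T_M bounded operators on H such that ‖T_j^* T_ℓ‖ + ‖T_j T_ℓ^*‖ ≤ 2^{−|j−ℓ|/2} for all 0 ≤ j, ℓ ≤ M. Then there is a constant C independent of M such that ‖Σ_{ℓ=0}^M T_ℓ‖ ≤ C. -/

import Mathlib

open Finset

namespace CotlarSteinAux

/-- Noncommutative expansion of a power of a sum. -/
lemma sum_pi_succ {β : Type*} [Fintype β] {A : Type*} [AddCommMonoid A] (n : ℕ)
    (g : (Fin (n+1) → β) → A) :
    ∑ f : Fin (n+1) → β, g f = ∑ b : β, ∑ f : Fin n → β, g (Fin.cons b f) := by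
  rw [← Equiv.sum_comp (Fin.consEquiv fun _ => β) g, Fintype.sum_prod_type]
  rfl

lemma pow_sum_expand {R : Type*} [Semiring R] {β : Type*} [Fintype β] [DecidableEq β]
    (c : β → R) :
    ∀ n : ℕ, (∑ b, c b) ^ n = ∑ f : Fin n → β, (List.ofFn fun i => c (f i)).prod := by
  intro n
  induction n with
  | zero => simp
  | succ n ih =>
    rw [pow_succ', ih, Finset.sum_mul_sum, sum_pi_succ n fun f => (List.ofFn fun i => c (f i)).prod]
    refine Finset.sum_congr rfl fun b _ => Finset.sum_congr rfl fun f _ => ?_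
    rw [List.ofFn_succ, List.prod_cons]
    simp [Fin.cons_succ, Fin.cons_zero]

variable {ι : Type*} (w : ι → ι → ℝ)

/-- weight chain with a dangling start index -/
def Ew : ι → List (ι × ι) → ℝ
  | _, [] => 1
  | a, p :: t => w a p.1 * (w p.1 p.2 * Ew p.2 t)

/-- offset-pair squared weights -/
def Fw : ι → List (ι × ι) → ℝ
  | _, [] => 1
  | a, p :: t => (w a p.1)^2 * Fw p.2 t

/-- within-pair squared weights -/
def Cw : List (ι × ι) → ℝ
  | [] => 1
  | p :: t => (w p.1 p.2)^2 * Cw t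

/-- the final per-term bound -/
def Dw : List (ι × ι) → ℝ
  | [] => 1
  | p :: t => w p.1 p.2 * Ew w p.2 t

variable {w}

lemma Ew_nonneg (hw : ∀ a b, 0 ≤ w a b) : ∀ a l, 0 ≤ Ew w a l
  | _, [] => zero_le_one
  | a, p :: t => by
      exact mul_nonneg (hw _ _) (mul_nonneg (hw _ _) (Ew_nonneg hw _ t))

lemma Fw_nonneg (hw : ∀ a b, 0 ≤ w a b) : ∀ a l, 0 ≤ Fw w a l
  | _, [] => zero_le_one
  | a, p :: t => mul_nonneg (sq_nonneg _) (Fw_nonneg hw _ t)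

lemma Cw_nonneg : ∀ l, 0 ≤ Cw w l
  | [] => zero_le_one
  | p :: t => mul_nonneg (sq_nonneg _) (Cw_nonneg t)

lemma Dw_nonneg (hw : ∀ a b, 0 ≤ w a b) : ∀ l, 0 ≤ Dw w l
  | [] => zero_le_one
  | p :: t => mul_nonneg (hw _ _) (Ew_nonneg hw _ t)

lemma Cw_mul_Fw : ∀ (l : List (ι × ι)) (a : ι), Cw w l * Fw w a l = (Ew w a l)^2
  | [], a => by simp [Cw, Fw, Ew]
  | p :: t, a => by
      have ih := Cw_mul_Fw t p.2
      simp only [Cw, Fw, Ew]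
      linear_combination (w p.1 p.2^2 * w a p.1^2) * ih

variable {H : Type*} [NormedAddCommGroup H] [InnerProductSpace ℂ H] [CompleteSpace H]

variable (T : ι → H →L[ℂ] H)

/-- alternating product T_{j₁}* T_{ℓ₁} T_{j₂}* T_{ℓ₂} ⋯ -/
noncomputable def P : List (ι × ι) → (H →L[ℂ] H)
  | [] => 1
  | p :: t => (star (T p.1) * T p.2) * P t

variable {T}

lemma P_eq_prod : ∀ l : List (ι × ι), P T l = (l.map fun p => star (T p.1) * T p.2).prod
  | [] => rfl
  | p :: t => by simp only [P, P_eq_prod t, List.map_cons, List.prod_cons]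

lemma norm_one_le : ‖(1 : H →L[ℂ] H)‖ ≤ 1 := by
  rw [ContinuousLinearMap.one_def]; exact ContinuousLinearMap.norm_id_le

lemma norm_P_le_Cw (hb1 : ∀ j ℓ, ‖star (T j) * T ℓ‖ ≤ (w j ℓ)^2) :
    ∀ l, ‖P T l‖ ≤ Cw w l
  | [] => norm_one_le
  | p :: t => by
      refine le_trans (norm_mul_le _ _) ?_
      exact mul_le_mul (hb1 _ _) (norm_P_le_Cw hb1 t) (norm_nonneg _) (sq_nonneg _)

lemma norm_mul_P_le_Fw (hw : ∀ a b, 0 ≤ w a b) (hT1 : ∀ j, ‖T j‖ ≤ 1)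
    (hb2 : ∀ j ℓ, ‖T j * star (T ℓ)‖ ≤ (w j ℓ)^2) :
    ∀ (l : List (ι × ι)) (a : ι), ‖T a * P T l‖ ≤ Fw w a l
  | [], a => by
      simp only [P, mul_one]; exact hT1 a
  | p :: t, a => by
      have : T a * P T (p :: t) = (T a * star (T p.1)) * (T p.2 * P T t) := by
        simp only [P, mul_assoc]
      rw [this]
      refine le_trans (norm_mul_le _ _) ?_
      exact mul_le_mul (hb2 _ _) (norm_mul_P_le_Fw hw hT1 hb2 t p.2) (norm_nonneg _)
        (sq_nonneg _)

lemma norm_P_le_Dw (hw : ∀ a b, 0 ≤ w a b) (hT1 : ∀ j, ‖T j‖ ≤ 1)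
    (hb1 : ∀ j ℓ, ‖star (T j) * T ℓ‖ ≤ (w j ℓ)^2)
    (hb2 : ∀ j ℓ, ‖T j * star (T ℓ)‖ ≤ (w j ℓ)^2) :
    ∀ l, ‖P T l‖ ≤ Dw w l
  | [] => norm_one_le
  | p :: t => by
      have h2 : ‖P T (p :: t)‖ ≤ Fw w p.2 t := by
        have : P T (p :: t) = star (T p.1) * (T p.2 * P T t) := by simp only [P, mul_assoc]
        rw [this]
        refine le_trans (norm_mul_le _ _) ?_
        calc ‖star (T p.1)‖ * ‖T p.2 * P T t‖
            ≤ 1 * Fw w p.2 t := by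
              refine mul_le_mul ?_ (norm_mul_P_le_Fw hw hT1 hb2 t p.2) (norm_nonneg _)
                zero_le_one
              rw [norm_star]; exact hT1 _
          _ = Fw w p.2 t := one_mul _
      have h1 : ‖P T (p :: t)‖ ≤ Cw w (p :: t) := norm_P_le_Cw hb1 _
      have hsq : ‖P T (p :: t)‖^2 ≤ (Dw w (p :: t))^2 := by
        have hD2 : (Dw w (p :: t))^2 = Cw w (p :: t) * Fw w p.2 t := by
          simp only [Dw, Cw]
          have h := Cw_mul_Fw (w := w) t p.2
          linear_combination (-(w p.1 p.2^2)) * h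
        rw [hD2, sq]
        exact mul_le_mul h1 h2 (norm_nonneg _) (Cw_nonneg _)
      have hDnn : 0 ≤ Dw w (p :: t) := Dw_nonneg hw _
      nlinarith [norm_nonneg (P T (p :: t))]

section Sums

variable [Fintype ι]

lemma sum_Ew_le (hw : ∀ a b, 0 ≤ w a b) {c0 : ℝ} (hc0 : 1 ≤ c0)
    (hs : ∀ a : ι, ∑ b : ι, w a b ≤ c0) :
    ∀ n (a : ι), ∑ f : Fin n → ι × ι, Ew w a (List.ofFn f) ≤ c0 ^ (2*n) := by
  intro n
  induction n with
  | zero => intro a; simp [Ew]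
  | succ n ih =>
    intro a
    rw [sum_pi_succ n fun f => Ew w a (List.ofFn f)]
    have step : ∀ p : ι × ι, ∑ f : Fin n → ι × ι, Ew w a (List.ofFn (Fin.cons p f))
        ≤ w a p.1 * (w p.1 p.2 * c0 ^ (2*n)) := by
      intro p
      have : ∀ f : Fin n → ι × ι, Ew w a (List.ofFn (Fin.cons p f))
          = w a p.1 * (w p.1 p.2 * Ew w p.2 (List.ofFn f)) := by
        intro f; rw [List.ofFn_cons]; rfl
      simp only [this, ← Finset.mul_sum]
      have := ih p.2
      have h1 : 0 ≤ w a p.1 := hw _ _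
      have h2 : 0 ≤ w p.1 p.2 := hw _ _
      exact mul_le_mul_of_nonneg_left (mul_le_mul_of_nonneg_left (ih p.2) h2) h1
    calc ∑ p : ι × ι, ∑ f : Fin n → ι × ι, Ew w a (List.ofFn (Fin.cons p f))
        ≤ ∑ p : ι × ι, w a p.1 * (w p.1 p.2 * c0 ^ (2*n)) :=
          Finset.sum_le_sum fun p _ => step p
      _ = ∑ j : ι, (w a j * (∑ ℓ : ι, w j ℓ)) * c0 ^ (2*n) := by
          rw [Fintype.sum_prod_type]
          refine Finset.sum_congr rfl fun j _ => ?_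
          show ∑ y : ι, w a j * (w j y * c0 ^ (2*n)) = _
          rw [← Finset.mul_sum, ← Finset.sum_mul, mul_assoc]
      _ ≤ ∑ j : ι, (w a j * c0) * c0 ^ (2*n) := by
          refine Finset.sum_le_sum fun j _ => ?_
          have hcn : (0:ℝ) ≤ c0 ^ (2*n) := pow_nonneg (by linarith) _
          exact mul_le_mul_of_nonneg_right
            (mul_le_mul_of_nonneg_left (hs j) (hw a j)) hcn
      _ = (∑ j : ι, w a j) * (c0 * c0 ^ (2*n)) := by
          rw [← Finset.sum_mul, ← Finset.sum_mul, mul_assoc]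
      _ ≤ c0 * (c0 * c0 ^ (2*n)) := by
          have hx : (0:ℝ) ≤ c0 * c0 ^ (2*n) :=
            mul_nonneg (by linarith) (pow_nonneg (by linarith) _)
          exact mul_le_mul_of_nonneg_right (hs a) hx
      _ = c0 ^ (2*(n+1)) := by ring

lemma sum_Dw_le (hw : ∀ a b, 0 ≤ w a b) {c0 : ℝ} (hc0 : 1 ≤ c0)
    (hs : ∀ a : ι, ∑ b : ι, w a b ≤ c0) (n : ℕ) :
    ∑ f : Fin (n+1) → ι × ι, Dw w (List.ofFn f)
      ≤ (Fintype.card ι) * c0 ^ (2*n+1) := by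
  rw [sum_pi_succ n fun f => Dw w (List.ofFn f)]
  have step : ∀ p : ι × ι, ∑ f : Fin n → ι × ι, Dw w (List.ofFn (Fin.cons p f))
      ≤ w p.1 p.2 * c0 ^ (2*n) := by
    intro p
    have : ∀ f : Fin n → ι × ι, Dw w (List.ofFn (Fin.cons p f))
        = w p.1 p.2 * Ew w p.2 (List.ofFn f) := by
      intro f; rw [List.ofFn_cons]; rfl
    simp only [this, ← Finset.mul_sum]
    exact mul_le_mul_of_nonneg_left (sum_Ew_le hw hc0 hs n p.2) (hw _ _)
  calc ∑ p : ι × ι, ∑ f : Fin n → ι × ι, Dw w (List.ofFn (Fin.cons p f))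
      ≤ ∑ p : ι × ι, w p.1 p.2 * c0 ^ (2*n) := Finset.sum_le_sum fun p _ => step p
    _ = ∑ j : ι, (∑ ℓ : ι, w j ℓ) * c0 ^ (2*n) := by
        rw [Fintype.sum_prod_type]
        refine Finset.sum_congr rfl fun j _ => ?_
        show ∑ y : ι, w j y * c0 ^ (2*n) = _
        rw [← Finset.sum_mul]
    _ ≤ ∑ j : ι, c0 * c0 ^ (2*n) := by
        refine Finset.sum_le_sum fun j _ => ?_
        exact mul_le_mul_of_nonneg_right (hs j) (pow_nonneg (by linarith) _)
    _ = (Fintype.card ι) * c0 ^ (2*n+1) := by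
        rw [Finset.sum_const, Finset.card_univ, nsmul_eq_mul]; ring

end Sums

lemma schur_geom {r : ℝ} (h0 : 0 ≤ r) (h1 : r < 1) (N j : ℕ) (hj : j < N) :
    ∑ ℓ ∈ Finset.range N, r ^ Nat.dist j ℓ ≤ 2 * (1-r)⁻¹ := by
  have hsummable : Summable fun i : ℕ => r ^ i := summable_geometric_of_lt_one h0 h1
  have hgeom : ∀ n : ℕ, ∑ i ∈ Finset.range n, r ^ i ≤ (1-r)⁻¹ := by
    intro n
    refine le_trans (Summable.sum_le_tsum (Finset.range n) (fun i _ => pow_nonneg h0 i) hsummable) ?_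
    rw [tsum_geometric_of_lt_one h0 h1]
  have hsplit : ∑ ℓ ∈ Finset.range N, r ^ Nat.dist j ℓ
      = ∑ ℓ ∈ Finset.range (j+1), r ^ Nat.dist j ℓ
        + ∑ ℓ ∈ Finset.Ico (j+1) N, r ^ Nat.dist j ℓ := by
    rw [Finset.range_eq_Ico, ← Finset.sum_Ico_consecutive _ (Nat.zero_le (j+1)) hj, Finset.range_eq_Ico]
  rw [hsplit]
  have hfirst : ∑ ℓ ∈ Finset.range (j+1), r ^ Nat.dist j ℓ ≤ (1-r)⁻¹ := by
    have : ∑ ℓ ∈ Finset.range (j+1), r ^ Nat.dist j ℓ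
        = ∑ ℓ ∈ Finset.range (j+1), r ^ (j - ℓ) := by
      refine Finset.sum_congr rfl fun ℓ hℓ => ?_
      rw [Nat.dist_eq_sub_of_le_right (Nat.lt_succ_iff.mp (Finset.mem_range.mp hℓ))]
    rw [this]
    have hrefl := Finset.sum_range_reflect (fun i => r ^ i) (j+1)
    have : ∑ ℓ ∈ Finset.range (j+1), r ^ (j - ℓ) = ∑ i ∈ Finset.range (j+1), r ^ i := by
      rw [← hrefl]
      exact Finset.sum_congr rfl fun ℓ hℓ => by norm_num
    rw [this]; exact hgeom _
  have hsecond : ∑ ℓ ∈ Finset.Ico (j+1) N, r ^ Nat.dist j ℓ ≤ (1-r)⁻¹ := by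
    rw [Finset.sum_Ico_eq_sum_range]
    refine le_trans (Finset.sum_le_sum (g := fun i => r ^ i) fun i _ => ?_) (hgeom _)
    have hd : Nat.dist j (j + 1 + i) = i + 1 := by
      rw [Nat.dist_eq_sub_of_le (by omega)]; omega
    rw [hd]
    exact pow_le_pow_of_le_one h0 h1.le (by omega)
  linarith

end CotlarSteinAux

open CotlarSteinAux in
theorem stmt_6 {H : Type*} [NormedAddCommGroup H] [InnerProductSpace ℂ H]
    [CompleteSpace H] :
    ∃ C > 0, ∀ (M : ℕ) (T : Fin (M+1) → H →L[ℂ] H),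
      (∀ j ℓ : Fin (M+1),
        ‖ContinuousLinearMap.adjoint (T j) ∘L T ℓ‖
          + ‖T j ∘L ContinuousLinearMap.adjoint (T ℓ)‖
          ≤ (2:ℝ) ^ (-|((j:ℕ):ℝ) - ((ℓ:ℕ):ℝ)| / 2)) →
      ‖∑ ℓ, T ℓ‖ ≤ C := by
  set r : ℝ := (2:ℝ) ^ (-(1:ℝ)/4) with hr_def
  have hr0 : 0 < r := Real.rpow_pos_of_pos two_pos _
  have hr1 : r < 1 := by
    rw [hr_def]
    exact Real.rpow_lt_one_of_one_lt_of_neg (by norm_num) (by norm_num)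
  set c0 : ℝ := 2 * (1-r)⁻¹ with hc0_def
  have hinv1 : 1 ≤ (1-r)⁻¹ := by
    rw [le_inv_comm₀] <;> nlinarith
  have hc0_1 : 1 ≤ c0 := by rw [hc0_def]; linarith
  refine ⟨c0, by linarith, ?_⟩
  intro M T hT
  -- the weight function
  set w : Fin (M+1) → Fin (M+1) → ℝ := fun j ℓ => r ^ Nat.dist (j:ℕ) (ℓ:ℕ) with hw_def
  have hw : ∀ a b, 0 ≤ w a b := fun a b => pow_nonneg hr0.le _
  have hw_eq : ∀ j ℓ : Fin (M+1),
      (2:ℝ) ^ (-|((j:ℕ):ℝ) - ((ℓ:ℕ):ℝ)| / 2) = (w j ℓ)^2 := by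
    intro j ℓ
    have habs : |((j:ℕ):ℝ) - ((ℓ:ℕ):ℝ)| = (Nat.dist (j:ℕ) (ℓ:ℕ) : ℝ) := by
      rcases le_total (j:ℕ) (ℓ:ℕ) with h | h
      · rw [Nat.dist_eq_sub_of_le h, abs_sub_comm, abs_of_nonneg (by
          simp only [sub_nonneg]; exact_mod_cast h)]
        push_cast [h]; ring
      · rw [Nat.dist_eq_sub_of_le_right h, abs_of_nonneg (by
          simp only [sub_nonneg]; exact_mod_cast h)]
        push_cast [h]; ring
    rw [habs, hw_def]
    set d : ℕ := Nat.dist (j:ℕ) (ℓ:ℕ)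
    have : -((d:ℝ))/2 = (-(1:ℝ)/4) * ((d*2 : ℕ) : ℝ) := by push_cast; ring
    rw [this, Real.rpow_mul (by norm_num : (0:ℝ) ≤ 2), Real.rpow_natCast, ← hr_def,
      pow_mul, sq]
  -- consume the hypothesis
  have hb1 : ∀ j ℓ, ‖star (T j) * T ℓ‖ ≤ (w j ℓ)^2 := by
    intro j ℓ
    have h := hT j ℓ
    rw [hw_eq j ℓ] at h
    rw [ContinuousLinearMap.star_eq_adjoint, ContinuousLinearMap.mul_def]
    have := norm_nonneg (T j ∘L ContinuousLinearMap.adjoint (T ℓ))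
    linarith
  have hb2 : ∀ j ℓ, ‖T j * star (T ℓ)‖ ≤ (w j ℓ)^2 := by
    intro j ℓ
    have h := hT j ℓ
    rw [hw_eq j ℓ] at h
    rw [ContinuousLinearMap.star_eq_adjoint, ContinuousLinearMap.mul_def]
    have := norm_nonneg (ContinuousLinearMap.adjoint (T j) ∘L T ℓ)
    linarith
  have hT1 : ∀ j, ‖T j‖ ≤ 1 := by
    intro j
    have h := hb1 j j
    rw [CStarRing.norm_star_mul_self] at h
    have hww : (w j j)^2 = 1 := by
      rw [hw_def]; simp [Nat.dist_self]
    rw [hww] at h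
    nlinarith [norm_nonneg (T j)]
  -- Schur bound
  have hs : ∀ a : Fin (M+1), ∑ b : Fin (M+1), w a b ≤ c0 := by
    intro a
    rw [hc0_def]
    have := schur_geom hr0.le hr1 (M+1) (a:ℕ) a.isLt
    calc ∑ b : Fin (M+1), w a b
        = ∑ ℓ ∈ Finset.range (M+1), r ^ Nat.dist (a:ℕ) ℓ := by
          rw [← Fin.sum_univ_eq_sum_range (fun ℓ => r ^ Nat.dist (a:ℕ) ℓ) (M+1)]
      _ ≤ 2 * (1-r)⁻¹ := this
  -- the main power bound
  set S : H →L[ℂ] H := ∑ ℓ, T ℓ with hS_def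
  have hA : star S * S = ∑ p : Fin (M+1) × Fin (M+1), star (T p.1) * T p.2 := by
    rw [hS_def, star_sum, Finset.sum_mul_sum, Fintype.sum_prod_type]
  have key : ∀ n : ℕ, ‖(star S * S) ^ (n+1)‖ ≤ (M+1) * c0 ^ (2*n+1) := by
    intro n
    rw [hA, pow_sum_expand (fun p : Fin (M+1) × Fin (M+1) => star (T p.1) * T p.2) (n+1)]
    refine le_trans (norm_sum_le _ _) ?_
    have hterm : ∀ f : Fin (n+1) → Fin (M+1) × Fin (M+1),
        ‖(List.ofFn fun i => star (T (f i).1) * T (f i).2).prod‖ ≤ Dw w (List.ofFn f) := by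
      intro f
      have : (List.ofFn fun i => star (T (f i).1) * T (f i).2)
          = (List.ofFn f).map fun p => star (T p.1) * T p.2 := by
        rw [List.map_ofFn]; rfl
      rw [this, ← P_eq_prod]
      exact norm_P_le_Dw hw hT1 hb1 hb2 _
    refine le_trans (Finset.sum_le_sum fun f _ => hterm f) ?_
    have h2 := sum_Dw_le hw hc0_1 hs (ι := Fin (M+1)) n
    rw [Fintype.card_fin] at h2
    exact_mod_cast h2
  -- conclude by the tensor-power trick
  by_contra hcon
  push_neg at hcon
  have hS0 : 0 < ‖S‖ := lt_of_le_of_lt (by linarith) hcon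
  have hc00 : 0 < c0 := by linarith
  have hq : 1 < (‖S‖/c0)^2 := by
    have h1 : 1 < ‖S‖/c0 := (one_lt_div hc00).mpr hcon
    nlinarith
  obtain ⟨k, hk⟩ := pow_unbounded_of_one_lt ((M:ℝ)+1) hq
  set N : ℕ := 2^k with hN_def
  have hN1 : 1 ≤ N := Nat.one_le_two_pow
  have hkN : k ≤ N := (Nat.lt_two_pow_self (n := k)).le
  have hsa : IsSelfAdjoint (star S * S) := IsSelfAdjoint.star_mul_self S
  have hnorm_pow : ‖(star S * S) ^ N‖ = ‖star S * S‖ ^ N := by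
    rw [hN_def, ← coe_nnnorm, hsa.nnnorm_pow_two_pow k, NNReal.coe_pow, coe_nnnorm]
  have hnormA : ‖star S * S‖ = ‖S‖ * ‖S‖ := CStarRing.norm_star_mul_self
  have hkey := key (N-1)
  rw [show N - 1 + 1 = N by omega] at hkey
  rw [hnorm_pow, hnormA] at hkey
  have h2N : 2*(N-1)+1 ≤ 2*N := by omega
  have hkey2 : (‖S‖ * ‖S‖) ^ N ≤ ((M:ℝ)+1) * c0 ^ (2*N) := by
    refine le_trans hkey ?_
    have hp : c0 ^ (2*(N-1)+1) ≤ c0 ^ (2*N) := pow_le_pow_right₀ hc0_1 h2N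
    have hM1 : (0:ℝ) ≤ (M:ℝ)+1 := by positivity
    exact mul_le_mul_of_nonneg_left hp hM1
  have hfin : ((‖S‖/c0)^2)^N ≤ (M:ℝ)+1 := by
    have hc2N : (0:ℝ) < c0 ^ (2*N) := pow_pos hc00 _
    rw [div_pow, div_pow, div_le_iff₀ (by positivity)]
    calc (‖S‖^2)^N = (‖S‖ * ‖S‖)^N := by ring
      _ ≤ ((M:ℝ)+1) * c0 ^ (2*N) := hkey2
      _ = ((M:ℝ)+1) * (c0^2)^N := by rw [← pow_mul]
  have hmono : ((‖S‖/c0)^2)^k ≤ ((‖S‖/c0)^2)^N := pow_le_pow_right₀ hq.le hkN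
  linarith
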